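/- Let B = [0,1]^2 be a bin containing a set I of pairwise non-overlapping axis-parallel rectangles. Then the empty space B \ I can be partitioned into at most 3|I| + 1 axis-parallel rectangles, using only horizontal cuts (obtained by extending the top and bottom edges of each rectangle of I leftwards and rightwards until they hit another rectangle or the bin boundary). -/

import Mathlib

open Set

noncomputable section AuxPart

variable {ι : Type*} (I : Finset ι) (x1 x2 y1 y2 : ι → ℝ)

/-- All horizontal cut levels: 0, 1 and the y-coordinates of rectangle edges. -/
def Tst : Finset ℝ := insert 0 (insert 1 (I.image y1 ∪ I.image y2))

lemma zero_mem_Tst : (0:ℝ) ∈ Tst I y1 y2 := Finset.mem_insert_self _ _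

lemma one_mem_Tst : (1:ℝ) ∈ Tst I y1 y2 :=
  Finset.mem_insert_of_mem (Finset.mem_insert_self _ _)

lemma y1_mem_Tst {i : ι} (hi : i ∈ I) : y1 i ∈ Tst I y1 y2 :=
  Finset.mem_insert_of_mem (Finset.mem_insert_of_mem
    (Finset.mem_union_left _ (Finset.mem_image_of_mem _ hi)))

lemma y2_mem_Tst {i : ι} (hi : i ∈ I) : y2 i ∈ Tst I y1 y2 :=
  Finset.mem_insert_of_mem (Finset.mem_insert_of_mem
    (Finset.mem_union_right _ (Finset.mem_image_of_mem _ hi)))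

lemma finSub (P : ℝ → Prop) : ({a : ℝ | a ∈ Tst I y1 y2 ∧ P a}).Finite :=
  (Tst I y1 y2).finite_toSet.subset (fun a h => h.1)

variable {I x1 x2 y1 y2}

lemma Tst_bounds (hin : ∀ i ∈ I, 0 ≤ x1 i ∧ x1 i ≤ x2 i ∧ x2 i ≤ 1 ∧
    0 ≤ y1 i ∧ y1 i ≤ y2 i ∧ y2 i ≤ 1) :
    ∀ a ∈ Tst I y1 y2, 0 ≤ a ∧ a ≤ 1 := by
  intro a ha
  simp only [Tst, Finset.mem_insert, Finset.mem_union, Finset.mem_image] at ha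
  rcases ha with rfl | rfl | ⟨i, hi, rfl⟩ | ⟨i, hi, rfl⟩
  · exact ⟨le_refl 0, zero_le_one⟩
  · exact ⟨zero_le_one, le_refl 1⟩
  · obtain ⟨_, _, _, h4, h5, h6⟩ := hin i hi
    exact ⟨h4, le_trans h5 h6⟩
  · obtain ⟨_, _, _, h4, h5, h6⟩ := hin i hi
    exact ⟨le_trans h4 h5, h6⟩

variable (I x1 x2 y1 y2)

/-- the next cut level strictly above `t`. -/
def nxt (t : ℝ) : ℝ := sInf {a : ℝ | a ∈ Tst I y1 y2 ∧ t < a}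

variable {I x1 x2 y1 y2}

lemma nxt_spec {t : ℝ} (ht : t ∈ Tst I y1 y2) (ht1 : t < 1) :
    nxt I y1 y2 t ∈ Tst I y1 y2 ∧ t < nxt I y1 y2 t ∧
      (∀ w ∈ Tst I y1 y2, t < w → nxt I y1 y2 t ≤ w) := by
  have hfin := finSub I y1 y2 (fun a => t < a)
  have hne : ({a : ℝ | a ∈ Tst I y1 y2 ∧ t < a}).Nonempty :=
    ⟨1, one_mem_Tst I y1 y2, ht1⟩
  have hmem := hne.csInf_mem hfin
  exact ⟨hmem.1, hmem.2, fun w hw hlt => csInf_le hfin.bddBelow ⟨hw, hlt⟩⟩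

lemma nxt_le_one {t : ℝ} (ht : t ∈ Tst I y1 y2) (ht1 : t < 1) :
    nxt I y1 y2 t ≤ 1 :=
  (nxt_spec ht ht1).2.2 1 (one_mem_Tst I y1 y2) ht1

variable (I x1 x2 y1 y2)

/-- the previous cut level strictly below `t`. -/
def prv (t : ℝ) : ℝ := sSup {a : ℝ | a ∈ Tst I y1 y2 ∧ a < t}

variable {I x1 x2 y1 y2}

lemma prv_spec {t : ℝ} (ht : t ∈ Tst I y1 y2) (ht0 : 0 < t) :
    prv I y1 y2 t ∈ Tst I y1 y2 ∧ prv I y1 y2 t < t ∧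
      (∀ w ∈ Tst I y1 y2, w < t → w ≤ prv I y1 y2 t) := by
  have hfin := finSub I y1 y2 (fun a => a < t)
  have hne : ({a : ℝ | a ∈ Tst I y1 y2 ∧ a < t}).Nonempty :=
    ⟨0, zero_mem_Tst I y1 y2, ht0⟩
  have hmem := hne.csSup_mem hfin
  exact ⟨hmem.1, hmem.2, fun w hw hlt => le_csSup hfin.bddAbove ⟨hw, hlt⟩⟩

lemma nxt_prv {t : ℝ} (ht : t ∈ Tst I y1 y2) (ht0 : 0 < t) (ht1 : t ≤ 1) :
    nxt I y1 y2 (prv I y1 y2 t) = t := by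
  obtain ⟨hpT, hpt, hpmax⟩ := prv_spec ht ht0
  have hp1 : prv I y1 y2 t < 1 := lt_of_lt_of_le hpt ht1
  obtain ⟨hnT, hnp, hnmin⟩ := nxt_spec hpT hp1
  have h1 : nxt I y1 y2 (prv I y1 y2 t) ≤ t := hnmin t ht hpt
  rcases lt_or_eq_of_le h1 with h | h
  · exact absurd (hpmax _ hnT h) (not_le.mpr hnp)
  · exact h

variable (I x1 x2 y1 y2)

/-- the bottom cut level of the slab containing `y`. -/
def base (y : ℝ) : ℝ := sSup {a : ℝ | a ∈ Tst I y1 y2 ∧ a < 1 ∧ a ≤ y}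

variable {I x1 x2 y1 y2}

lemma base_spec {y : ℝ} (hy0 : 0 ≤ y) (hy1 : y ≤ 1) :
    base I y1 y2 y ∈ Tst I y1 y2 ∧ base I y1 y2 y < 1 ∧ base I y1 y2 y ≤ y ∧
      y ≤ nxt I y1 y2 (base I y1 y2 y) ∧
      (∀ w ∈ Tst I y1 y2, w < 1 → w ≤ y → w ≤ base I y1 y2 y) := by
  have hfin := finSub I y1 y2 (fun a => a < 1 ∧ a ≤ y)
  have hne : ({a : ℝ | a ∈ Tst I y1 y2 ∧ a < 1 ∧ a ≤ y}).Nonempty :=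
    ⟨0, zero_mem_Tst I y1 y2, zero_lt_one, hy0⟩
  have hmem := hne.csSup_mem hfin
  have hmax : ∀ w ∈ Tst I y1 y2, w < 1 → w ≤ y →
      w ≤ base I y1 y2 y := fun w hw h1 h2 => le_csSup hfin.bddAbove ⟨hw, h1, h2⟩
  refine ⟨hmem.1, hmem.2.1, hmem.2.2, ?_, hmax⟩
  by_contra h
  push_neg at h
  obtain ⟨hnT, hnb, hnmin⟩ := nxt_spec hmem.1 hmem.2.1
  have h1 : nxt I y1 y2 (base I y1 y2 y) < 1 := lt_of_lt_of_le h hy1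
  exact absurd (hmax _ hnT h1 h.le) (not_le.mpr hnb)


variable (I x1 x2 y1 y2)

/-- the rectangles crossing the slab `[t, nxt t]` with nonempty width. -/
def Cr (t : ℝ) : Finset ι :=
  I.filter (fun i => y1 i ≤ t ∧ nxt I y1 y2 t ≤ y2 i ∧ x1 i < x2 i)

/-- `[a,b]` is a maximal empty interval in slab with bottom `t`. -/
def IsPiece (t a b : ℝ) : Prop :=
  t ∈ Tst I y1 y2 ∧ t < 1 ∧ 0 ≤ a ∧ a < b ∧ b ≤ 1 ∧
  (∀ i ∈ Cr I x1 x2 y1 y2 t, ∀ z, a < z → z < b → ¬(x1 i < z ∧ z < x2 i)) ∧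
  (a = 0 ∨ ∃ i ∈ Cr I x1 x2 y1 y2 t, x2 i = a) ∧
  (b = 1 ∨ ∃ i ∈ Cr I x1 x2 y1 y2 t, x1 i = b)

variable {I x1 x2 y1 y2}

lemma Cr_mem {t : ℝ} {i : ι} :
    i ∈ Cr I x1 x2 y1 y2 t ↔ i ∈ I ∧ y1 i ≤ t ∧ nxt I y1 y2 t ≤ y2 i ∧ x1 i < x2 i := by
  simp [Cr, Finset.mem_filter, and_assoc]

/-- two pieces of the same slab with overlapping interiors coincide. -/
lemma piece_unique {t a b a' b' : ℝ} (h : IsPiece I x1 x2 y1 y2 t a b)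
    (h' : IsPiece I x1 x2 y1 y2 t a' b') {z : ℝ}
    (hz1 : a < z) (hz2 : z < b) (hz3 : a' < z) (hz4 : z < b') : a = a' ∧ b = b' := by
  obtain ⟨hT, ht1, ha0, hab, hb1, hemp, hmaxa, hmaxb⟩ := h
  obtain ⟨_, _, ha0', hab', hb1', hemp', hmaxa', hmaxb'⟩ := h'
  have keyb : ∀ (u v u' v' : ℝ), u < z → z < v → u' < z → z < v' → v' ≤ 1 →
      (v = 1 ∨ ∃ i ∈ Cr I x1 x2 y1 y2 t, x1 i = v) →
      (∀ i ∈ Cr I x1 x2 y1 y2 t, ∀ w, u' < w → w < v' → ¬(x1 i < w ∧ w < x2 i)) →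
      ¬ (v < v') := by
    intro u v u' v' hu hv hu' hv' hv1' hmax hemp2 hlt
    rcases hmax with rfl | ⟨i, hi, hx⟩
    · linarith
    · have hx12 : x1 i < x2 i := (Cr_mem.mp hi).2.2.2
      set w := min (x2 i) v' with hw
      have h1 : v < w := lt_min (hx ▸ hx12) hlt
      have hw1 : w ≤ v' := min_le_right _ _
      have hw2 : w ≤ x2 i := min_le_left _ _
      refine hemp2 i hi ((v + w)/2) (by linarith) (by linarith) ⟨by rw [hx]; linarith, by linarith⟩
  have keya : ∀ (u v u' v' : ℝ), u < z → z < v → u' < z → z < v' → 0 ≤ u' →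
      (u = 0 ∨ ∃ i ∈ Cr I x1 x2 y1 y2 t, x2 i = u) →
      (∀ i ∈ Cr I x1 x2 y1 y2 t, ∀ w, u' < w → w < v' → ¬(x1 i < w ∧ w < x2 i)) →
      ¬ (u' < u) := by
    intro u v u' v' hu hv hu' hv' hu0' hmax hemp2 hlt
    rcases hmax with rfl | ⟨i, hi, hx⟩
    · linarith
    · have hx12 : x1 i < x2 i := (Cr_mem.mp hi).2.2.2
      set w := max (x1 i) u' with hw
      have h1 : w < u := max_lt (hx ▸ hx12) hlt
      have hw1 : u' ≤ w := le_max_right _ _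
      have hw2 : x1 i ≤ w := le_max_left _ _
      refine hemp2 i hi ((w + u)/2) (by linarith) (by linarith) ⟨by linarith, by rw [hx]; linarith⟩
  have hbb : b = b' := by
    rcases lt_trichotomy b b' with h | h | h
    · exact absurd h (keyb a b a' b' hz1 hz2 hz3 hz4 hb1' hmaxb hemp')
    · exact h
    · exact absurd h (keyb a' b' a b hz3 hz4 hz1 hz2 hb1 hmaxb' hemp)
  have haa : a = a' := by
    rcases lt_trichotomy a a' with h | h | h
    · exact absurd h (keya a' b' a b hz3 hz4 hz1 hz2 ha0 hmaxa' hemp)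
    · exact h
    · exact absurd h (keya a b a' b' hz1 hz2 hz3 hz4 ha0' hmaxa hemp')
  exact ⟨haa, hbb⟩

/-- existence of the piece through an uncovered point. -/
lemma piece_exists {t x : ℝ} (hT : t ∈ Tst I y1 y2) (ht1 : t < 1)
    (hx0 : 0 ≤ x) (hx1 : x ≤ 1)
    (hemp : ∀ i ∈ Cr I x1 x2 y1 y2 t, ¬(x1 i ≤ x ∧ x ≤ x2 i)) :
    ∃ a b, IsPiece I x1 x2 y1 y2 t a b ∧ a ≤ x ∧ x ≤ b := by
  classical
  set A : Set ℝ := {v | (v = 0 ∨ ∃ i ∈ Cr I x1 x2 y1 y2 t, x2 i = v) ∧ v ≤ x} with hA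
  set B : Set ℝ := {v | (v = 1 ∨ ∃ i ∈ Cr I x1 x2 y1 y2 t, x1 i = v) ∧ x ≤ v} with hB
  have hAfin : A.Finite := by
    apply Set.Finite.subset (Set.Finite.insert 0 ((I.image x2).finite_toSet))
    rintro v ⟨(rfl | ⟨i, hi, rfl⟩), -⟩
    · exact Set.mem_insert _ _
    · exact Set.mem_insert_of_mem _ (by simpa using ⟨i, (Cr_mem.mp hi).1, rfl⟩)
  have hBfin : B.Finite := by
    apply Set.Finite.subset (Set.Finite.insert 1 ((I.image x1).finite_toSet))
    rintro v ⟨(rfl | ⟨i, hi, rfl⟩), -⟩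
    · exact Set.mem_insert _ _
    · exact Set.mem_insert_of_mem _ (by simpa using ⟨i, (Cr_mem.mp hi).1, rfl⟩)
  have hAne : A.Nonempty := ⟨0, Or.inl rfl, hx0⟩
  have hBne : B.Nonempty := ⟨1, Or.inl rfl, hx1⟩
  set a := sSup A with ha
  set b := sInf B with hb
  have haA : a ∈ A := hAne.csSup_mem hAfin
  have hbB : b ∈ B := hBne.csInf_mem hBfin
  have hax : a ≤ x := haA.2
  have hxb : x ≤ b := hbB.2
  have ha0 : 0 ≤ a := le_csSup hAfin.bddAbove ⟨Or.inl rfl, hx0⟩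
  have hb1 : b ≤ 1 := csInf_le hBfin.bddBelow ⟨Or.inl rfl, hx1⟩
  have hax' : a = x → x = 0 := by
    intro h
    rcases haA.1 with h0 | ⟨i, hi, hxa⟩
    · rw [← h, h0]
    · have h12 : x1 i < x2 i := (Cr_mem.mp hi).2.2.2
      exact absurd ⟨by linarith, by linarith⟩ (hemp i hi)
  have hbx' : b = x → x = 1 := by
    intro h
    rcases hbB.1 with h0 | ⟨i, hi, hxa⟩
    · rw [← h, h0]
    · have h12 : x1 i < x2 i := (Cr_mem.mp hi).2.2.2
      exact absurd ⟨by linarith, by linarith⟩ (hemp i hi)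
  have hab : a < b := by
    rcases eq_or_lt_of_le hax with h | h
    · rcases eq_or_lt_of_le hxb with h' | h'
      · have h1 := hax' h
        have h2 := hbx' h'.symm
        linarith
      · linarith
    · linarith
  refine ⟨a, b, ⟨hT, ht1, ha0, hab, hb1, ?_, ?_, ?_⟩, hax, hxb⟩
  · -- emptiness
    intro i hi z hz1 hz2 hz3
    rcases not_and_or.mp (hemp i hi) with h | h
    · push_neg at h
      -- x < x1 i : then x1 i ∈ B so b ≤ x1 i, z < b ≤ x1 i contradiction with x1 i < z
      have : b ≤ x1 i := csInf_le hBfin.bddBelow ⟨Or.inr ⟨i, hi, rfl⟩, le_of_lt h⟩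
      linarith [hz3.1]
    · push_neg at h
      -- x2 i < x : then x2 i ∈ A so x2 i ≤ a
      have : x2 i ≤ a := le_csSup hAfin.bddAbove ⟨Or.inr ⟨i, hi, rfl⟩, le_of_lt h⟩
      linarith [hz3.2]
  · exact haA.1
  · exact hbB.1


variable (I x1 x2 y1 y2)

/-- the level at which a piece starting at slab `t` ends. -/
def Epc (t a b : ℝ) : ℝ :=
  sInf {v : ℝ | v ∈ Tst I y1 y2 ∧ t < v ∧ (v = 1 ∨ ¬ IsPiece I x1 x2 y1 y2 v a b)}

def Newp (t a b : ℝ) : Prop :=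
  IsPiece I x1 x2 y1 y2 t a b ∧
    (t = 0 ∨ ¬ IsPiece I x1 x2 y1 y2 (prv I y1 y2 t) a b)

/-- the family of pieces. -/
def Fp : Finset (ℝ × ℝ × ℝ) :=
  @Finset.filter _ (fun p => Newp I x1 x2 y1 y2 p.1 p.2.1 p.2.2)
    (Classical.decPred _)
    ((Tst I y1 y2) ×ˢ ((insert (0:ℝ) (I.image x2)) ×ˢ (insert (1:ℝ) (I.image x1))))

variable {I x1 x2 y1 y2}

lemma Epc_spec {t a b : ℝ} (hp : IsPiece I x1 x2 y1 y2 t a b) :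
    Epc I x1 x2 y1 y2 t a b ∈ Tst I y1 y2 ∧ t < Epc I x1 x2 y1 y2 t a b ∧
    Epc I x1 x2 y1 y2 t a b ≤ 1 ∧
    (∀ w ∈ Tst I y1 y2, t ≤ w → w < Epc I x1 x2 y1 y2 t a b →
      IsPiece I x1 x2 y1 y2 w a b) := by
  set S : Set ℝ :=
    {v : ℝ | v ∈ Tst I y1 y2 ∧ t < v ∧ (v = 1 ∨ ¬ IsPiece I x1 x2 y1 y2 v a b)} with hS
  have hfin : S.Finite := (Tst I y1 y2).finite_toSet.subset (fun a h => h.1)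
  have hne : S.Nonempty := ⟨1, one_mem_Tst I y1 y2, hp.2.1, Or.inl rfl⟩
  have hmem : sInf S ∈ S := hne.csInf_mem hfin
  have hle1 : sInf S ≤ 1 := csInf_le hfin.bddBelow ⟨one_mem_Tst I y1 y2, hp.2.1, Or.inl rfl⟩
  refine ⟨hmem.1, hmem.2.1, hle1, ?_⟩
  intro w hw htw hwE
  rcases eq_or_lt_of_le htw with rfl | hlt
  · exact hp
  · by_contra hc
    exact absurd (csInf_le hfin.bddBelow ⟨hw, hlt, Or.inr hc⟩) (not_le.mpr hwE)

lemma mem_Fp {t a b : ℝ} :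
    (t, a, b) ∈ Fp I x1 x2 y1 y2 ↔ Newp I x1 x2 y1 y2 t a b := by
  letI : DecidablePred (fun p : ℝ × ℝ × ℝ => Newp I x1 x2 y1 y2 p.1 p.2.1 p.2.2) :=
    Classical.decPred _
  constructor
  · intro h
    exact (Finset.mem_filter.mp h).2
  · intro h
    refine Finset.mem_filter.mpr ⟨?_, h⟩
    have hp := h.1
    refine Finset.mem_product.mpr ⟨hp.1, Finset.mem_product.mpr ⟨?_, ?_⟩⟩
    · rcases hp.2.2.2.2.2.2.1 with h0 | ⟨i, hi, hx⟩
      · exact h0 ▸ Finset.mem_insert_self _ _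
      · exact Finset.mem_insert_of_mem (Finset.mem_image.mpr ⟨i, (Cr_mem.mp hi).1, hx⟩)
    · rcases hp.2.2.2.2.2.2.2 with h0 | ⟨i, hi, hx⟩
      · exact h0 ▸ Finset.mem_insert_self _ _
      · exact Finset.mem_insert_of_mem (Finset.mem_image.mpr ⟨i, (Cr_mem.mp hi).1, hx⟩)


lemma Epc_alt {t a b : ℝ} (hp : IsPiece I x1 x2 y1 y2 t a b) :
    Epc I x1 x2 y1 y2 t a b = 1 ∨
      ¬ IsPiece I x1 x2 y1 y2 (Epc I x1 x2 y1 y2 t a b) a b := by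
  set S : Set ℝ :=
    {v : ℝ | v ∈ Tst I y1 y2 ∧ t < v ∧ (v = 1 ∨ ¬ IsPiece I x1 x2 y1 y2 v a b)} with hS
  have hfin : S.Finite := (Tst I y1 y2).finite_toSet.subset (fun a h => h.1)
  have hne : S.Nonempty := ⟨1, one_mem_Tst I y1 y2, hp.2.1, Or.inl rfl⟩
  exact (hne.csInf_mem hfin).2.2

/-- a piece's open box is disjoint from every rectangle's open box. -/
lemma piece_disj_rect
    (hin : ∀ i ∈ I, 0 ≤ x1 i ∧ x1 i ≤ x2 i ∧ x2 i ≤ 1 ∧ 0 ≤ y1 i ∧ y1 i ≤ y2 i ∧ y2 i ≤ 1)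
    {t a b : ℝ} (hp : IsPiece I x1 x2 y1 y2 t a b) {i : ι} (hi : i ∈ I)
    {x y : ℝ} (h1 : a < x) (h2 : x < b) (h3 : t < y)
    (h4 : y < Epc I x1 x2 y1 y2 t a b)
    (h5 : x1 i < x) (h6 : x < x2 i) (h7 : y1 i < y) (h8 : y < y2 i) : False := by
  obtain ⟨hET, htE, hE1, hext⟩ := Epc_spec hp
  have ht0 : 0 ≤ t := (Tst_bounds hin t hp.1).1
  have hy0 : 0 ≤ y := le_of_lt (lt_of_le_of_lt ht0 h3)
  have hy1 : y ≤ 1 := le_of_lt (lt_of_lt_of_le h4 hE1)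
  obtain ⟨huT, hu1, huy, hynu, humax⟩ := base_spec (I := I) (y1 := y1) (y2 := y2) hy0 hy1
  set u := base I y1 y2 y with hu
  have htu : t ≤ u := humax t hp.1 hp.2.1 (le_of_lt h3)
  have huE : u < Epc I x1 x2 y1 y2 t a b := lt_of_le_of_lt huy h4
  have hpu : IsPiece I x1 x2 y1 y2 u a b := hext u huT htu huE
  have hiu : i ∈ Cr I x1 x2 y1 y2 u := by
    rw [Cr_mem]
    refine ⟨hi, ?_, ?_, lt_trans h5 h6⟩
    · exact humax _ (y1_mem_Tst I y1 y2 hi) (lt_of_lt_of_le h7 hy1) (le_of_lt h7)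
    · exact (nxt_spec huT hu1).2.2 _ (y2_mem_Tst I y1 y2 hi) (lt_of_le_of_lt huy h8)
  exact hpu.2.2.2.2.2.1 i hiu x h1 h2 ⟨h5, h6⟩

/-- coverage: an uncovered point of the bin lies in some piece. -/
lemma piece_cover
    (hin : ∀ i ∈ I, 0 ≤ x1 i ∧ x1 i ≤ x2 i ∧ x2 i ≤ 1 ∧ 0 ≤ y1 i ∧ y1 i ≤ y2 i ∧ y2 i ≤ 1)
    {x y : ℝ} (hx0 : 0 ≤ x) (hx1 : x ≤ 1) (hy0 : 0 ≤ y) (hy1 : y ≤ 1)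
    (h : ∀ i ∈ I, ¬(x1 i ≤ x ∧ x ≤ x2 i ∧ y1 i ≤ y ∧ y ≤ y2 i)) :
    ∃ t a b, (t, a, b) ∈ Fp I x1 x2 y1 y2 ∧ a ≤ x ∧ x ≤ b ∧ t ≤ y ∧
      y ≤ Epc I x1 x2 y1 y2 t a b := by
  obtain ⟨huT, hu1, huy, hynu, humax⟩ := base_spec (I := I) (y1 := y1) (y2 := y2) hy0 hy1
  set u := base I y1 y2 y with hu
  have hemp : ∀ i ∈ Cr I x1 x2 y1 y2 u, ¬(x1 i ≤ x ∧ x ≤ x2 i) := by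
    intro i hiC hc
    obtain ⟨hiI, hiy1, hiy2, hix⟩ := Cr_mem.mp hiC
    exact h i hiI ⟨hc.1, hc.2, le_trans hiy1 huy, le_trans hynu hiy2⟩
  obtain ⟨a, b, hp, hax, hxb⟩ := piece_exists huT hu1 hx0 hx1 hemp
  -- descend to the start of the run
  set D : Set ℝ := {v : ℝ | v ∈ Tst I y1 y2 ∧ v ≤ u ∧
    ∀ w, w ∈ Tst I y1 y2 → v ≤ w → w ≤ u → IsPiece I x1 x2 y1 y2 w a b} with hD
  have hDfin : D.Finite := (Tst I y1 y2).finite_toSet.subset (fun a h => h.1)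
  have hDne : D.Nonempty := by
    refine ⟨u, huT, le_refl u, fun w hw h1 h2 => ?_⟩
    have : w = u := le_antisymm h2 h1
    rw [this]; exact hp
  set t := sInf D with ht
  have htD : t ∈ D := hDne.csInf_mem hDfin
  have htT : t ∈ Tst I y1 y2 := htD.1
  have htu : t ≤ u := htD.2.1
  have hpt : IsPiece I x1 x2 y1 y2 t a b := htD.2.2 t htT (le_refl t) htu
  have hnew : Newp I x1 x2 y1 y2 t a b := by
    refine ⟨hpt, ?_⟩
    by_cases h0 : t = 0
    · exact Or.inl h0
    · right
      have ht0 : 0 < t := lt_of_le_of_ne (Tst_bounds hin t htT).1 (Ne.symm h0)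
      obtain ⟨hpT, hplt, hpmax⟩ := prv_spec htT ht0
      set p := prv I y1 y2 t with hpp
      intro hcontra
      have hnp : nxt I y1 y2 p = t := nxt_prv htT ht0 (Tst_bounds hin t htT).2
      have hp1 : p < 1 := lt_of_lt_of_le hplt (Tst_bounds hin t htT).2
      have hpD : p ∈ D := by
        refine ⟨hpT, le_trans (le_of_lt hplt) htu, fun w hw h1 h2 => ?_⟩
        rcases eq_or_lt_of_le h1 with rfl | hlt
        · exact hcontra
        · have : t ≤ w := hnp ▸ (nxt_spec hpT hp1).2.2 w hw hlt
          exact htD.2.2 w hw this h2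
      exact absurd (csInf_le hDfin.bddBelow hpD) (not_le.mpr hplt)
  refine ⟨t, a, b, mem_Fp.mpr hnew, hax, hxb, le_trans htu huy, ?_⟩
  -- y ≤ Epc
  obtain ⟨hET, htE, hE1, hext⟩ := Epc_spec hpt
  set E := Epc I x1 x2 y1 y2 t a b with hE
  have huE : u < E := by
    by_contra hc
    push_neg at hc
    have hEu : E ≤ u := hc
    have hE1' : E < 1 := lt_of_le_of_lt hEu hu1
    have hEpiece : IsPiece I x1 x2 y1 y2 E a b := htD.2.2 E hET (le_of_lt htE) hEu
    rcases Epc_alt hpt with h1 | h2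
    · exact absurd h1 (ne_of_lt hE1')
    · exact h2 hEpiece
  have : nxt I y1 y2 u ≤ E := (nxt_spec huT hu1).2.2 E hET huE
  exact le_trans hynu this

/-- two distinct pieces have disjoint open boxes. -/
lemma pieces_disjoint_pt
    (hin : ∀ i ∈ I, 0 ≤ x1 i ∧ x1 i ≤ x2 i ∧ x2 i ≤ 1 ∧ 0 ≤ y1 i ∧ y1 i ≤ y2 i ∧ y2 i ≤ 1)
    {t a b t' a' b' : ℝ} (h : Newp I x1 x2 y1 y2 t a b)
    (h' : Newp I x1 x2 y1 y2 t' a' b')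
    (hne : (t, a, b) ≠ (t', a', b')) {x y : ℝ}
    (h1 : a < x) (h2 : x < b) (h3 : t < y) (h4 : y < Epc I x1 x2 y1 y2 t a b)
    (h1' : a' < x) (h2' : x < b') (h3' : t' < y)
    (h4' : y < Epc I x1 x2 y1 y2 t' a' b') : False := by
  obtain ⟨hET, htE, hE1, hext⟩ := Epc_spec h.1
  obtain ⟨hET', htE', hE1', hext'⟩ := Epc_spec h'.1
  have ht0 : 0 ≤ t := (Tst_bounds hin t h.1.1).1
  have hy0 : 0 ≤ y := le_of_lt (lt_of_le_of_lt ht0 h3)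
  have hy1 : y ≤ 1 := le_of_lt (lt_of_lt_of_le h4 hE1)
  obtain ⟨huT, hu1, huy, hynu, humax⟩ := base_spec (I := I) (y1 := y1) (y2 := y2) hy0 hy1
  set u := base I y1 y2 y with hu
  have htu : t ≤ u := humax t h.1.1 h.1.2.1 (le_of_lt h3)
  have htu' : t' ≤ u := humax t' h'.1.1 h'.1.2.1 (le_of_lt h3')
  have hpu : IsPiece I x1 x2 y1 y2 u a b := hext u huT htu (lt_of_le_of_lt huy h4)
  have hpu' : IsPiece I x1 x2 y1 y2 u a' b' := hext' u huT htu' (lt_of_le_of_lt huy h4')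
  obtain ⟨haa, hbb⟩ := piece_unique hpu hpu' h1 h2 h1' h2'
  have htt : t ≠ t' := by
    intro hc
    exact hne (by rw [hc, haa, hbb])
  -- wlog t < t'
  have key : ∀ s s' : ℝ, s < s' → s' ≤ u → s ∈ Tst I y1 y2 →
      Newp I x1 x2 y1 y2 s' a b →
      (∀ w, w ∈ Tst I y1 y2 → s ≤ w → w < Epc I x1 x2 y1 y2 s a b →
        IsPiece I x1 x2 y1 y2 w a b) →
      u < Epc I x1 x2 y1 y2 s a b → False := by
    intro s s' hss hs'u hsT hn' hextt hsE
    have hs'0 : 0 < s' := lt_of_le_of_lt (Tst_bounds hin s hsT).1 hss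
    rcases hn'.2 with h0 | hnp
    · linarith
    · obtain ⟨hpT, hplt, hpmax⟩ := prv_spec hn'.1.1 hs'0
      have hsp : s ≤ prv I y1 y2 s' := hpmax s hsT hss
      have hpE : prv I y1 y2 s' < Epc I x1 x2 y1 y2 s a b :=
        lt_of_lt_of_le hplt (le_trans hs'u (le_of_lt hsE))
      exact hnp (hextt _ hpT hsp hpE)
  rcases lt_or_gt_of_ne htt with hlt | hgt
  · exact key t t' hlt htu' h.1.1 (haa ▸ hbb ▸ h') hext (lt_of_le_of_lt huy h4)
  · have h'new : Newp I x1 x2 y1 y2 t' a b := haa ▸ hbb ▸ h'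
    have hnew : Newp I x1 x2 y1 y2 t a b := h
    exact key t' t hgt htu h'.1.1 hnew
      (fun w hw hw1 hw2 => by
        have := hext' w hw hw1 (by rw [← haa, ← hbb]; exact hw2)
        rwa [← haa, ← hbb] at this)
      (by rw [haa, hbb]; exact lt_of_le_of_lt huy h4')


variable (I x1 x2 y1 y2)

def Pt1 (t a : ℝ) : Prop := ∃ i, i ∈ Cr I x1 x2 y1 y2 t ∧ y1 i = t ∧ x2 i = a
def Pt2 (t b : ℝ) : Prop := ∃ i, i ∈ Cr I x1 x2 y1 y2 t ∧ y1 i = t ∧ x1 i = b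
def Pt3 (t a b : ℝ) : Prop := ∃ i, i ∈ I ∧ y2 i = t ∧ y1 i < t ∧
  ∃ z, a < z ∧ z < b ∧ x1 i < z ∧ z < x2 i

/-- the charging map. -/
def gtag (p : ℝ × ℝ × ℝ) : Option (ι × Fin 3) :=
  @dite _ (Pt1 I x1 x2 y1 y2 p.1 p.2.1) (Classical.dec _)
    (fun h => some (h.choose, 0)) (fun _ =>
  @dite _ (Pt2 I x1 x2 y1 y2 p.1 p.2.2) (Classical.dec _)
    (fun h => some (h.choose, 1)) (fun _ =>
  @dite _ (Pt3 I x1 x2 y1 y2 p.1 p.2.1 p.2.2) (Classical.dec _)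
    (fun h => some (h.choose, 2)) (fun _ => none)))

variable {I x1 x2 y1 y2}

lemma gtag_cases (p : ℝ × ℝ × ℝ) :
    (∃ i, (i ∈ Cr I x1 x2 y1 y2 p.1 ∧ y1 i = p.1 ∧ x2 i = p.2.1) ∧
      gtag I x1 x2 y1 y2 p = some (i, 0)) ∨
    (¬ Pt1 I x1 x2 y1 y2 p.1 p.2.1 ∧
      ∃ i, (i ∈ Cr I x1 x2 y1 y2 p.1 ∧ y1 i = p.1 ∧ x1 i = p.2.2) ∧
      gtag I x1 x2 y1 y2 p = some (i, 1)) ∨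
    (¬ Pt1 I x1 x2 y1 y2 p.1 p.2.1 ∧ ¬ Pt2 I x1 x2 y1 y2 p.1 p.2.2 ∧
      ∃ i, (i ∈ I ∧ y2 i = p.1 ∧ y1 i < p.1 ∧
        ∃ z, p.2.1 < z ∧ z < p.2.2 ∧ x1 i < z ∧ z < x2 i) ∧
      gtag I x1 x2 y1 y2 p = some (i, 2)) ∨
    (¬ Pt1 I x1 x2 y1 y2 p.1 p.2.1 ∧ ¬ Pt2 I x1 x2 y1 y2 p.1 p.2.2 ∧
      ¬ Pt3 I x1 x2 y1 y2 p.1 p.2.1 p.2.2 ∧ gtag I x1 x2 y1 y2 p = none) := by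
  unfold gtag
  split_ifs with h1 h2 h3
  · exact Or.inl ⟨h1.choose, h1.choose_spec, rfl⟩
  · exact Or.inr (Or.inl ⟨h1, h2.choose, h2.choose_spec, rfl⟩)
  · exact Or.inr (Or.inr (Or.inl ⟨h1, h2, h3.choose, h3.choose_spec, rfl⟩))
  · exact Or.inr (Or.inr (Or.inr ⟨h1, h2, h3, rfl⟩))

/-- a piece which is charged to nothing must be the bottom-left piece. -/
lemma none_case
    (hin : ∀ i ∈ I, 0 ≤ x1 i ∧ x1 i ≤ x2 i ∧ x2 i ≤ 1 ∧ 0 ≤ y1 i ∧ y1 i ≤ y2 i ∧ y2 i ≤ 1)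
    {t a b : ℝ} (hN : Newp I x1 x2 y1 y2 t a b)
    (h1 : ¬ Pt1 I x1 x2 y1 y2 t a) (h2 : ¬ Pt2 I x1 x2 y1 y2 t b)
    (h3 : ¬ Pt3 I x1 x2 y1 y2 t a b) : t = 0 ∧ a = 0 := by
  obtain ⟨hp, hstart⟩ := hN
  obtain ⟨htT, ht1, ha0, hab, hb1, hemp, hmaxa, hmaxb⟩ := hp
  have ht : t = 0 := by
    by_contra h0
    have ht0 : 0 < t := lt_of_le_of_ne (Tst_bounds hin t htT).1 (Ne.symm h0)
    rcases hstart with h | hnp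
    · exact h0 h
    obtain ⟨hpT, hplt, hpmax⟩ := prv_spec htT ht0
    set p := prv I y1 y2 t with hpp
    have hnpt : nxt I y1 y2 p = t := nxt_prv htT ht0 (Tst_bounds hin t htT).2
    have hp1 : p < 1 := lt_of_lt_of_le hplt (Tst_bounds hin t htT).2
    by_cases hF : (∀ i ∈ Cr I x1 x2 y1 y2 p, ∀ z, a < z → z < b → ¬(x1 i < z ∧ z < x2 i))
    · by_cases hG : (a = 0 ∨ ∃ i ∈ Cr I x1 x2 y1 y2 p, x2 i = a)
      · by_cases hH : (b = 1 ∨ ∃ i ∈ Cr I x1 x2 y1 y2 p, x1 i = b)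
        · exact hnp ⟨hpT, hp1, ha0, hab, hb1, hF, hG, hH⟩
        · -- right maximality fails at p: get Pt2
          push_neg at hH
          rcases hmaxb with hb1' | ⟨r, hr, hxr⟩
          · exact hH.1 hb1'
          · obtain ⟨hrI, hry1, hry2, hrx⟩ := Cr_mem.mp hr
            have hr_not_p : ¬ (y1 r ≤ p) := by
              intro hc
              exact hH.2 r (Cr_mem.mpr ⟨hrI, hc, by
                rw [hnpt]
                exact le_trans (le_of_lt ((nxt_spec htT ht1).2.1)) hry2, hrx⟩) hxr
            push_neg at hr_not_p
            have : t ≤ y1 r := hnpt ▸ (nxt_spec hpT hp1).2.2 _ (y1_mem_Tst I y1 y2 hrI) hr_not_p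
            have hy1r : y1 r = t := le_antisymm hry1 this
            exact h2 ⟨r, hr, hy1r, hxr⟩
      · -- left maximality fails at p: get Pt1
        push_neg at hG
        rcases hmaxa with ha0' | ⟨r, hr, hxr⟩
        · exact hG.1 ha0'
        · obtain ⟨hrI, hry1, hry2, hrx⟩ := Cr_mem.mp hr
          have hr_not_p : ¬ (y1 r ≤ p) := by
            intro hc
            exact hG.2 r (Cr_mem.mpr ⟨hrI, hc, by
              rw [hnpt]
              exact le_trans (le_of_lt ((nxt_spec htT ht1).2.1)) hry2, hrx⟩) hxr
          push_neg at hr_not_p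
          have : t ≤ y1 r := hnpt ▸ (nxt_spec hpT hp1).2.2 _ (y1_mem_Tst I y1 y2 hrI) hr_not_p
          have hy1r : y1 r = t := le_antisymm hry1 this
          exact h1 ⟨r, hr, hy1r, hxr⟩
    · -- emptiness fails at p: get Pt3
      push_neg at hF
      obtain ⟨i, hiC, z, hz1, hz2, hz3⟩ := hF
      obtain ⟨hiI, hiy1, hiy2, hix⟩ := Cr_mem.mp hiC
      have hiy2' : t ≤ y2 i := hnpt ▸ hiy2
      have hi_not_t : i ∉ Cr I x1 x2 y1 y2 t := by
        intro hc
        exact hemp i hc z hz1 hz2 hz3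
      have hy2i : y2 i = t := by
        rcases eq_or_lt_of_le hiy2' with h | h
        · exact h.symm
        · exact absurd (Cr_mem.mpr ⟨hiI, le_trans hiy1 (le_of_lt hplt),
            (nxt_spec htT ht1).2.2 _ (y2_mem_Tst I y1 y2 hiI) h, hix⟩) hi_not_t
      exact h3 ⟨i, hiI, hy2i, lt_of_le_of_lt hiy1 hplt, z, hz1, hz2, hz3.1, hz3.2⟩
  refine ⟨ht, ?_⟩
  by_contra ha
  rcases hmaxa with h0 | ⟨r, hr, hxr⟩
  · exact ha h0
  · obtain ⟨hrI, hry1, hry2, hrx⟩ := Cr_mem.mp hr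
    have : y1 r = t := le_antisymm hry1 (ht ▸ (hin r hrI).2.2.2.1)
    exact h1 ⟨r, hr, this, hxr⟩


/-- key geometric step for injectivity of the `Top` charge. -/
lemma tag2_helper
    (hdisj : ∀ i ∈ I, ∀ j ∈ I, i ≠ j →
      Disjoint (Set.Ioo (x1 i) (x2 i) ×ˢ Set.Ioo (y1 i) (y2 i))
               (Set.Ioo (x1 j) (x2 j) ×ˢ Set.Ioo (y1 j) (y2 j)))
    {t A B A' B' : ℝ} {i : ι}
    (hp : IsPiece I x1 x2 y1 y2 t A B) (hp' : IsPiece I x1 x2 y1 y2 t A' B')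
    (hiI : i ∈ I) (hy2 : y2 i = t) (hy1 : y1 i < t)
    {z z' : ℝ} (hz1 : A < z) (hz2 : z < B) (hz3 : x1 i < z) (hz4 : z < x2 i)
    (hz1' : A' < z') (hz2' : z' < B') (hz3' : x1 i < z') (hz4' : z' < x2 i)
    (hBA : B ≤ A') (hP2 : ¬ Pt2 I x1 x2 y1 y2 t B) : False := by
  have hB1 : B < 1 := by
    have : B' ≤ 1 := hp'.2.2.2.2.1
    linarith
  rcases hp.2.2.2.2.2.2.2 with h | ⟨r, hr, hxr⟩
  · linarith
  · obtain ⟨hrI, hry1, hry2, hrx⟩ := Cr_mem.mp hr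
    have hir : i ≠ r := by
      intro hc
      rw [← hc] at hxr
      linarith
    have hBx2i : B < x2 i := by linarith
    have hy1rt : y1 r = t := by
      rcases eq_or_lt_of_le hry1 with h | h
      · exact h
      · -- y1 r < t : derive a contradiction with hdisj
        exfalso
        have htnt : t < nxt I y1 y2 t := (nxt_spec hp.1 hp.2.1).2.1
        set xc := (B + min (x2 r) (x2 i)) / 2 with hxc
        set yc := (max (y1 i) (y1 r) + t) / 2 with hyc
        have hm1 : min (x2 r) (x2 i) ≤ x2 r := min_le_left _ _
        have hm2 : min (x2 r) (x2 i) ≤ x2 i := min_le_right _ _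
        have hm3 : B < min (x2 r) (x2 i) := lt_min (hxr ▸ hrx) hBx2i
        have hM1 : y1 i ≤ max (y1 i) (y1 r) := le_max_left _ _
        have hM2 : y1 r ≤ max (y1 i) (y1 r) := le_max_right _ _
        have hM3 : max (y1 i) (y1 r) < t := max_lt hy1 h
        have hmem1 : (xc, yc) ∈ Set.Ioo (x1 i) (x2 i) ×ˢ Set.Ioo (y1 i) (y2 i) := by
          constructor
          · constructor <;> simp only [hxc] <;> [linarith; linarith]
          · constructor <;> simp only [hyc] <;> [linarith; linarith]
        have hmem2 : (xc, yc) ∈ Set.Ioo (x1 r) (x2 r) ×ˢ Set.Ioo (y1 r) (y2 r) := by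
          constructor
          · constructor <;> simp only [hxc] <;> [linarith [hxr]; linarith]
          · constructor <;> simp only [hyc] <;> [linarith; linarith [hry2]]
        exact Set.disjoint_left.mp (hdisj i hiI r hrI hir) hmem1 hmem2
    exact hP2 ⟨r, hr, hy1rt, hxr⟩

/-- injectivity of the charging map on pieces. -/
lemma gtag_injOn
    (hin : ∀ i ∈ I, 0 ≤ x1 i ∧ x1 i ≤ x2 i ∧ x2 i ≤ 1 ∧ 0 ≤ y1 i ∧ y1 i ≤ y2 i ∧ y2 i ≤ 1)
    (hdisj : ∀ i ∈ I, ∀ j ∈ I, i ≠ j →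
      Disjoint (Set.Ioo (x1 i) (x2 i) ×ˢ Set.Ioo (y1 i) (y2 i))
               (Set.Ioo (x1 j) (x2 j) ×ˢ Set.Ioo (y1 j) (y2 j)))
    {p p' : ℝ × ℝ × ℝ} (hp : p ∈ Fp I x1 x2 y1 y2) (hp' : p' ∈ Fp I x1 x2 y1 y2)
    (heq : gtag I x1 x2 y1 y2 p = gtag I x1 x2 y1 y2 p') : p = p' := by
  obtain ⟨t, a, b⟩ := p
  obtain ⟨t', a', b'⟩ := p'
  have hN : Newp I x1 x2 y1 y2 t a b := mem_Fp.mp hp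
  have hN' : Newp I x1 x2 y1 y2 t' a' b' := mem_Fp.mp hp'
  have hab : a < b := hN.1.2.2.2.1
  have hab' : a' < b' := hN'.1.2.2.2.1
  rcases gtag_cases (I := I) (x1 := x1) (x2 := x2) (y1 := y1) (y2 := y2) (t, a, b) with
    ⟨i, ⟨hiC, hiy, hix⟩, hg⟩ | ⟨hn1, i, ⟨hiC, hiy, hix⟩, hg⟩ |
    ⟨hn1, hn2, i, ⟨hiI, hiy2, hiy1, z, hza, hzb, hzx1, hzx2⟩, hg⟩ | ⟨hn1, hn2, hn3, hg⟩ <;>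
  rcases gtag_cases (I := I) (x1 := x1) (x2 := x2) (y1 := y1) (y2 := y2) (t', a', b') with
    ⟨i', ⟨hiC', hiy', hix'⟩, hg'⟩ | ⟨hn1', i', ⟨hiC', hiy', hix'⟩, hg'⟩ |
    ⟨hn1', hn2', i', ⟨hiI', hiy2', hiy1', z', hza', hzb', hzx1', hzx2'⟩, hg'⟩ |
    ⟨hn1', hn2', hn3', hg'⟩ <;>
  rw [hg, hg'] at heq
  · -- tag 0 / tag 0
    simp only [Option.some.injEq, Prod.mk.injEq] at heq
    obtain ⟨hii, -⟩ := heq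
    subst hii
    have hiy0 : y1 i = t := hiy
    have hiy0' : y1 i = t' := hiy'
    have hix0 : x2 i = a := hix
    have hix0' : x2 i = a' := hix'
    have htt : t = t' := by rw [← hiy0, ← hiy0']
    have haa : a = a' := by rw [← hix0, ← hix0']
    subst htt; subst haa
    have hm : a < min b b' := lt_min hab hab'
    have h1 : min b b' ≤ b := min_le_left _ _
    have h2 : min b b' ≤ b' := min_le_right _ _
    have hbb : b = b' := (piece_unique hN.1 hN'.1 (z := (a + min b b')/2)
      (by linarith) (by linarith) (by linarith) (by linarith)).2
    rw [hbb]
  · exfalso; injection heq with h2; injection h2 with h3 h4; exact absurd h4 (by decide)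
  · exfalso; injection heq with h2; injection h2 with h3 h4; exact absurd h4 (by decide)
  · simp at heq
  · exfalso; injection heq with h2; injection h2 with h3 h4; exact absurd h4 (by decide)
  · -- tag 1 / tag 1
    simp only [Option.some.injEq, Prod.mk.injEq] at heq
    obtain ⟨hii, -⟩ := heq
    subst hii
    have hiy0 : y1 i = t := hiy
    have hiy0' : y1 i = t' := hiy'
    have hix0 : x1 i = b := hix
    have hix0' : x1 i = b' := hix'
    have htt : t = t' := by rw [← hiy0, ← hiy0']
    have hbb : b = b' := by rw [← hix0, ← hix0']
    subst htt; subst hbb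
    have hm : max a a' < b := max_lt hab hab'
    have h1 : a ≤ max a a' := le_max_left _ _
    have h2 : a' ≤ max a a' := le_max_right _ _
    have haa : a = a' := (piece_unique hN.1 hN'.1 (z := (max a a' + b)/2)
      (by linarith) (by linarith) (by linarith) (by linarith)).1
    rw [haa]
  · exfalso; injection heq with h2; injection h2 with h3 h4; exact absurd h4 (by decide)
  · simp at heq
  · exfalso; injection heq with h2; injection h2 with h3 h4; exact absurd h4 (by decide)
  · exfalso; injection heq with h2; injection h2 with h3 h4; exact absurd h4 (by decide)
  · -- tag 2 / tag 2
    simp only [Option.some.injEq, Prod.mk.injEq] at heq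
    obtain ⟨hii, -⟩ := heq
    subst hii
    have hiy20 : y2 i = t := hiy2
    have hiy20' : y2 i = t' := hiy2'
    have hiy10 : y1 i < t := hiy1
    have hza0 : a < z := hza
    have hzb0 : z < b := hzb
    have hza0' : a' < z' := hza'
    have hzb0' : z' < b' := hzb'
    have hn20 : ¬ Pt2 I x1 x2 y1 y2 t b := hn2
    have hn20' : ¬ Pt2 I x1 x2 y1 y2 t' b' := hn2'
    have htt : t = t' := by rw [← hiy20, ← hiy20']
    subst htt
    by_cases hover : a' < b ∧ a < b'
    · have hm1 : max a a' < min b b' := by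
        rcases le_total a a' with h | h <;> rcases le_total b b' with h2 | h2
        · rw [max_eq_right h, min_eq_left h2]; exact hover.1
        · rw [max_eq_right h, min_eq_right h2]; exact hab'
        · rw [max_eq_left h, min_eq_left h2]; exact hab
        · rw [max_eq_left h, min_eq_right h2]; exact hover.2
      have h1 : a ≤ max a a' := le_max_left _ _
      have h2 : a' ≤ max a a' := le_max_right _ _
      have h3 : min b b' ≤ b := min_le_left _ _
      have h4 : min b b' ≤ b' := min_le_right _ _
      obtain ⟨haa, hbb⟩ := piece_unique hN.1 hN'.1 (z := (max a a' + min b b')/2)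
        (by linarith) (by linarith) (by linarith) (by linarith)
      rw [haa, hbb]
    · exfalso
      rcases not_and_or.mp hover with h | h
      · push_neg at h
        exact tag2_helper hdisj hN.1 hN'.1 hiI hiy20 hiy10
          hza0 hzb0 hzx1 hzx2 hza0' hzb0' hzx1' hzx2' h hn20
      · push_neg at h
        exact tag2_helper hdisj hN'.1 hN.1 hiI hiy20 hiy10
          hza0' hzb0' hzx1' hzx2' hza0 hzb0 hzx1 hzx2 h hn20'
  · simp at heq
  · simp at heq
  · simp at heq
  · simp at heq
  · -- none / none
    have hn10 : ¬ Pt1 I x1 x2 y1 y2 t a := hn1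
    have hn20 : ¬ Pt2 I x1 x2 y1 y2 t b := hn2
    have hn30 : ¬ Pt3 I x1 x2 y1 y2 t a b := hn3
    have hn10' : ¬ Pt1 I x1 x2 y1 y2 t' a' := hn1'
    have hn20' : ¬ Pt2 I x1 x2 y1 y2 t' b' := hn2'
    have hn30' : ¬ Pt3 I x1 x2 y1 y2 t' a' b' := hn3'
    obtain ⟨ht0, ha0⟩ := none_case hin hN hn10 hn20 hn30
    obtain ⟨ht0', ha0'⟩ := none_case hin hN' hn10' hn20' hn30'
    have htt : t = t' := by rw [ht0, ht0']
    have haa : a = a' := by rw [ha0, ha0']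
    subst htt; subst haa
    have hm : a < min b b' := lt_min hab hab'
    have h1 : min b b' ≤ b := min_le_left _ _
    have h2 : min b b' ≤ b' := min_le_right _ _
    have hbb : b = b' := (piece_unique hN.1 hN'.1 (z := (a + min b b')/2)
      (by linarith) (by linarith) (by linarith) (by linarith)).2
    rw [hbb]


/-- the number of pieces is at most `3|I|+1`. -/
lemma card_Fp
    (hin : ∀ i ∈ I, 0 ≤ x1 i ∧ x1 i ≤ x2 i ∧ x2 i ≤ 1 ∧ 0 ≤ y1 i ∧ y1 i ≤ y2 i ∧ y2 i ≤ 1)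
    (hdisj : ∀ i ∈ I, ∀ j ∈ I, i ≠ j →
      Disjoint (Set.Ioo (x1 i) (x2 i) ×ˢ Set.Ioo (y1 i) (y2 i))
               (Set.Ioo (x1 j) (x2 j) ×ˢ Set.Ioo (y1 j) (y2 j))) :
    (Fp I x1 x2 y1 y2).card ≤ 3 * I.card + 1 := by
  classical
  set tgt : Finset (Option (ι × Fin 3)) :=
    insert none ((I ×ˢ (Finset.univ : Finset (Fin 3))).image some) with htgt
  have hmaps : ∀ p ∈ Fp I x1 x2 y1 y2, gtag I x1 x2 y1 y2 p ∈ tgt := by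
    intro p hp
    rcases gtag_cases (I := I) (x1 := x1) (x2 := x2) (y1 := y1) (y2 := y2) p with
      ⟨i, ⟨hiC, -, -⟩, hg⟩ | ⟨-, i, ⟨hiC, -, -⟩, hg⟩ |
      ⟨-, -, i, ⟨hiI, -⟩, hg⟩ | ⟨-, -, -, hg⟩ <;> rw [hg]
    · exact Finset.mem_insert_of_mem (Finset.mem_image_of_mem _
        (Finset.mem_product.mpr ⟨(Cr_mem.mp hiC).1, Finset.mem_univ _⟩))
    · exact Finset.mem_insert_of_mem (Finset.mem_image_of_mem _
        (Finset.mem_product.mpr ⟨(Cr_mem.mp hiC).1, Finset.mem_univ _⟩))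
    · exact Finset.mem_insert_of_mem (Finset.mem_image_of_mem _
        (Finset.mem_product.mpr ⟨hiI, Finset.mem_univ _⟩))
    · exact Finset.mem_insert_self _ _
  have hcard : (Fp I x1 x2 y1 y2).card ≤ tgt.card :=
    Finset.card_le_card_of_injOn _ hmaps
      (fun p hp p' hp' heq => gtag_injOn hin hdisj
        (Finset.mem_coe.mp hp) (Finset.mem_coe.mp hp') heq)
  have htgtcard : tgt.card ≤ 3 * I.card + 1 := by
    calc tgt.card ≤ ((I ×ˢ (Finset.univ : Finset (Fin 3))).image some).card + 1 :=
          Finset.card_insert_le _ _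
      _ ≤ (I ×ˢ (Finset.univ : Finset (Fin 3))).card + 1 :=
          Nat.add_le_add_right (Finset.card_image_le) 1
      _ = 3 * I.card + 1 := by
          rw [Finset.card_product, Finset.card_univ, Fintype.card_fin]
          ring_nf
  exact le_trans hcard htgtcard


variable (I x1 x2 y1 y2)

def pfun (k : Fin (Fp I x1 x2 y1 y2).card) : ℝ × ℝ × ℝ :=
  ((Fp I x1 x2 y1 y2).equivFin.symm k : ℝ × ℝ × ℝ)

variable {I x1 x2 y1 y2}

lemma pfun_mem (k : Fin (Fp I x1 x2 y1 y2).card) :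
    pfun I x1 x2 y1 y2 k ∈ Fp I x1 x2 y1 y2 :=
  ((Fp I x1 x2 y1 y2).equivFin.symm k).2

lemma pfun_inj {k l : Fin (Fp I x1 x2 y1 y2).card}
    (h : pfun I x1 x2 y1 y2 k = pfun I x1 x2 y1 y2 l) : k = l :=
  (Fp I x1 x2 y1 y2).equivFin.symm.injective (Subtype.ext h)

lemma pfun_surj {p : ℝ × ℝ × ℝ} (hp : p ∈ Fp I x1 x2 y1 y2) :
    ∃ k, pfun I x1 x2 y1 y2 k = p :=
  ⟨(Fp I x1 x2 y1 y2).equivFin ⟨p, hp⟩, by simp [pfun]⟩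

end AuxPart

/-- The empty space of a unit bin containing non-overlapping rectangles `I`
can be partitioned into at most `3|I|+1` axis-parallel rectangles. -/
theorem stmt_11 {ι : Type*} (I : Finset ι)
    (x1 x2 y1 y2 : ι → ℝ)
    (hin : ∀ i ∈ I, 0 ≤ x1 i ∧ x1 i ≤ x2 i ∧ x2 i ≤ 1 ∧ 0 ≤ y1 i ∧ y1 i ≤ y2 i ∧ y2 i ≤ 1)
    (hdisj : ∀ i ∈ I, ∀ j ∈ I, i ≠ j →
      Disjoint (Set.Ioo (x1 i) (x2 i) ×ˢ Set.Ioo (y1 i) (y2 i))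
               (Set.Ioo (x1 j) (x2 j) ×ˢ Set.Ioo (y1 j) (y2 j))) :
    ∃ (n : ℕ) (p1 p2 q1 q2 : Fin n → ℝ),
      n ≤ 3 * I.card + 1 ∧
      (∀ k, 0 ≤ p1 k ∧ p1 k ≤ p2 k ∧ p2 k ≤ 1 ∧ 0 ≤ q1 k ∧ q1 k ≤ q2 k ∧ q2 k ≤ 1) ∧
      (∀ k l, k ≠ l →
        Disjoint (Set.Ioo (p1 k) (p2 k) ×ˢ Set.Ioo (q1 k) (q2 k))
                 (Set.Ioo (p1 l) (p2 l) ×ˢ Set.Ioo (q1 l) (q2 l))) ∧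
      (∀ k, ∀ i ∈ I,
        Disjoint (Set.Ioo (p1 k) (p2 k) ×ˢ Set.Ioo (q1 k) (q2 k))
                 (Set.Ioo (x1 i) (x2 i) ×ˢ Set.Ioo (y1 i) (y2 i))) ∧
      (Set.Icc (0:ℝ) 1 ×ˢ Set.Icc (0:ℝ) 1 ⊆
        (⋃ i ∈ I, Set.Icc (x1 i) (x2 i) ×ˢ Set.Icc (y1 i) (y2 i)) ∪
        ⋃ k, Set.Icc (p1 k) (p2 k) ×ˢ Set.Icc (q1 k) (q2 k)) := by
  classical
  refine ⟨(Fp I x1 x2 y1 y2).card,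
    fun k => (pfun I x1 x2 y1 y2 k).2.1,
    fun k => (pfun I x1 x2 y1 y2 k).2.2,
    fun k => (pfun I x1 x2 y1 y2 k).1,
    fun k => Epc I x1 x2 y1 y2 (pfun I x1 x2 y1 y2 k).1 (pfun I x1 x2 y1 y2 k).2.1
      (pfun I x1 x2 y1 y2 k).2.2, ?_, ?_, ?_, ?_, ?_⟩
  · exact card_Fp hin hdisj
  · -- bounds
    intro k
    have hN : Newp I x1 x2 y1 y2 (pfun I x1 x2 y1 y2 k).1 (pfun I x1 x2 y1 y2 k).2.1
        (pfun I x1 x2 y1 y2 k).2.2 := mem_Fp.mp (pfun_mem k)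
    obtain ⟨hET, htE, hE1, -⟩ := Epc_spec hN.1
    exact ⟨hN.1.2.2.1, le_of_lt hN.1.2.2.2.1, hN.1.2.2.2.2.1,
      (Tst_bounds hin _ hN.1.1).1, le_of_lt htE, hE1⟩
  · -- pairwise disjointness
    intro k l hkl
    have hN : Newp I x1 x2 y1 y2 (pfun I x1 x2 y1 y2 k).1 (pfun I x1 x2 y1 y2 k).2.1
        (pfun I x1 x2 y1 y2 k).2.2 := mem_Fp.mp (pfun_mem k)
    have hN' : Newp I x1 x2 y1 y2 (pfun I x1 x2 y1 y2 l).1 (pfun I x1 x2 y1 y2 l).2.1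
        (pfun I x1 x2 y1 y2 l).2.2 := mem_Fp.mp (pfun_mem l)
    have hne : pfun I x1 x2 y1 y2 k ≠ pfun I x1 x2 y1 y2 l := fun hc => hkl (pfun_inj hc)
    rw [Set.disjoint_left]
    rintro ⟨x, y⟩ h1 h2
    obtain ⟨⟨hx1, hx2⟩, ⟨hy1', hy2'⟩⟩ := h1
    obtain ⟨⟨hx1', hx2''⟩, ⟨hy1'', hy2''⟩⟩ := h2
    exact pieces_disjoint_pt hin hN hN' hne hx1 hx2 hy1' hy2' hx1' hx2'' hy1'' hy2''
  · -- disjoint from rectangles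
    intro k i hi
    have hN : Newp I x1 x2 y1 y2 (pfun I x1 x2 y1 y2 k).1 (pfun I x1 x2 y1 y2 k).2.1
        (pfun I x1 x2 y1 y2 k).2.2 := mem_Fp.mp (pfun_mem k)
    rw [Set.disjoint_left]
    rintro ⟨x, y⟩ h1 h2
    obtain ⟨⟨hx1, hx2⟩, ⟨hy1', hy2'⟩⟩ := h1
    obtain ⟨⟨hx1', hx2''⟩, ⟨hy1'', hy2''⟩⟩ := h2
    exact piece_disj_rect hin hN.1 hi hx1 hx2 hy1' hy2' hx1' hx2'' hy1'' hy2''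
  · -- coverage
    rintro ⟨x, y⟩ ⟨hx, hy⟩
    simp only [Set.mem_Icc] at hx hy
    by_cases hc : ∃ i ∈ I, x1 i ≤ x ∧ x ≤ x2 i ∧ y1 i ≤ y ∧ y ≤ y2 i
    · obtain ⟨i, hi, h1, h2, h3, h4⟩ := hc
      exact Set.mem_union_left _ (Set.mem_iUnion₂.mpr ⟨i, hi, ⟨h1, h2⟩, ⟨h3, h4⟩⟩)
    · have hc' : ∀ i ∈ I, ¬(x1 i ≤ x ∧ x ≤ x2 i ∧ y1 i ≤ y ∧ y ≤ y2 i) :=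
        fun i hi hcon => hc ⟨i, hi, hcon⟩
      obtain ⟨t, a, b, hmemF, hax, hxb, hty, hyE⟩ :=
        piece_cover hin hx.1 hx.2 hy.1 hy.2 hc'
      obtain ⟨k, hk⟩ := pfun_surj hmemF
      refine Set.mem_union_right _ (Set.mem_iUnion.mpr ⟨k, ?_⟩)
      simp only [hk]
      exact ⟨⟨hax, hxb⟩, ⟨hty, hyE⟩⟩
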